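/- Let n ≥ 4 be even, β the automorphism of D_{2n} with a ↦ a^{-1}, b ↦ a^2 b, and consider the permutation group generated by the right translation R(a^2 b) composed with β, together with R(ab), acting on D_{2n}. Then R(a^2 b)β has order n, R(ab)·(R(a^2 b)β)·R(ab) = (R(a^2 b)β)^{-1}, and L := ⟨R(a^2 b)β, R(ab)⟩ is a dihedral group of order 2n acting regularly on D_{2n}, with L ≠ R(D_{2n}). -/

import Mathlib

open DihedralGroup

/-- The right regular representation of `G` in `Sym(G)`, as a homomorphism. -/
def rightRegHom (G : Type*) [Group G] : G →* Equiv.Perm G where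
  toFun g := Equiv.mulRight g⁻¹
  map_one' := by ext x; simp
  map_mul' a b := by ext x; simp [mul_assoc]

/-- The subgroup `R(G) ≤ Sym(G)` of all right translations. -/
def rightRegRep (G : Type*) [Group G] : Subgroup (Equiv.Perm G) := (rightRegHom G).range

namespace DSRS

variable {n : ℕ}

def c0 (n : ℕ) : Equiv.Perm (DihedralGroup n) where
  toFun x := match x with
    | .r i => .sr i
    | .sr i => .r (i + 2)
  invFun x := match x with
    | .r i => .sr (i - 2)
    | .sr i => .r i
  left_inv := by rintro (i|i) <;> simp
  right_inv := by rintro (i|i) <;> simp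

def t0 (n : ℕ) : Equiv.Perm (DihedralGroup n) :=
  Equiv.mulRight (.r 1 * .sr 0)

@[simp] lemma c0_r (i : ZMod n) : c0 n (r i) = sr i := rfl
@[simp] lemma c0_sr (i : ZMod n) : c0 n (sr i) = r (i + 2) := rfl
@[simp] lemma t0_r (i : ZMod n) : t0 n (r i) = sr (-1 - i) := by
  simp [t0, sub_sub]
@[simp] lemma t0_sr (i : ZMod n) : t0 n (sr i) = r (-1 - i) := by
  simp [t0, sub_sub]

def par (h2 : 2 ∣ n) : ZMod n →+* ZMod 2 := ZMod.castHom h2 (ZMod 2)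

def phiFun (h2 : 2 ∣ n) : DihedralGroup n → Equiv.Perm (DihedralGroup n) :=
  fun g => match g with
  | .r i => if par h2 i = 0 then Equiv.mulRight (.r i)
            else c0 n * Equiv.mulRight (.r (i - 1))
  | .sr i => if par h2 i = 0 then t0 n * Equiv.mulRight (.r i)
             else t0 n * Equiv.mulRight (.r (i - 1)) * c0 n

lemma phiFun_r_r (h2 : 2 ∣ n) (i j : ZMod n) :
    phiFun h2 (.r i) (.r j) = if par h2 i = 0 then r (j + i) else sr (j + i - 1) := by
  by_cases h : par h2 i = 0 <;> simp [phiFun, h] <;> ring_nf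

lemma phiFun_r_sr (h2 : 2 ∣ n) (i k : ZMod n) :
    phiFun h2 (.r i) (.sr k) = if par h2 i = 0 then sr (k + i) else r (k + i + 1) := by
  by_cases h : par h2 i = 0 <;> simp [phiFun, h] <;> ring_nf

lemma phiFun_sr_r (h2 : 2 ∣ n) (i j : ZMod n) :
    phiFun h2 (.sr i) (.r j) = if par h2 i = 0 then sr (-1 - j - i) else r (-j - i) := by
  by_cases h : par h2 i = 0 <;> simp [phiFun, h] <;> ring_nf

lemma phiFun_sr_sr (h2 : 2 ∣ n) (i k : ZMod n) :
    phiFun h2 (.sr i) (.sr k) = if par h2 i = 0 then r (-1 - k - i) else sr (-k - i - 2) := by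
  by_cases h : par h2 i = 0 <;> simp [phiFun, h] <;> ring_nf



lemma zmod2_cases (a : ZMod 2) : a = 0 ∨ a = 1 := by revert a; decide

lemma two_zmod2 : (2 : ZMod 2) = 0 := by decide

lemma phiFun_mul (h2 : 2 ∣ n) (g h : DihedralGroup n) :
    phiFun h2 (g * h) = phiFun h2 g * phiFun h2 h := by
  have key : ∀ x : ZMod n, par h2 x = 0 ∨ par h2 x = 1 := fun x => zmod2_cases _
  rcases g with i | i <;> rcases h with j | j <;>
    rcases key i with hi | hi <;> rcases key j with hj | hj <;>
    ext (x | x) <;>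
    simp [phiFun_r_r, phiFun_r_sr, phiFun_sr_r, phiFun_sr_sr, Equiv.Perm.mul_apply,
      map_add, map_sub, map_neg, hi, hj, two_zmod2] <;>
    ring_nf <;> simp [two_zmod2]

def phi (h2 : 2 ∣ n) : DihedralGroup n →* Equiv.Perm (DihedralGroup n) :=
  MonoidHom.mk' (phiFun h2) (phiFun_mul h2)

lemma par_one (h2 : 2 ∣ n) : par h2 1 = 1 := map_one _
lemma par_zero (h2 : 2 ∣ n) : par h2 0 = 0 := map_zero _
lemma one_ne_zero_zmod2 : (1 : ZMod 2) ≠ 0 := by decide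

lemma phi_r_one (h2 : 2 ∣ n) : phi h2 (.r 1) = c0 n := by
  ext (x | x) <;>
    simp [phi, phiFun_r_r, phiFun_r_sr, par_one, one_ne_zero_zmod2] <;> ring_nf

lemma phi_sr_zero (h2 : 2 ∣ n) : phi h2 (.sr 0) = t0 n := by
  ext (x | x) <;>
    simp [phi, phiFun_sr_r, phiFun_sr_sr, par_zero]

lemma phi_free (h2 : 2 ∣ n) (g : DihedralGroup n) (x : DihedralGroup n)
    (h : phi h2 g x = x) : g = 1 := by
  have hmm : ∀ a : ZMod 2, -a - a = 0 := by decide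
  have hmm2 : ∀ a : ZMod 2, -a - a - 2 = 0 := by decide
  rcases g with i | i <;> rcases x with j | j <;>
    rcases zmod2_cases (par h2 i) with hi | hi <;>
    simp only [phi, MonoidHom.mk'_apply, phiFun_r_r, phiFun_r_sr, phiFun_sr_r, phiFun_sr_sr,
      hi, if_pos, if_neg one_ne_zero_zmod2, one_ne_zero_zmod2, if_true, reduceIte] at h
  · -- r i even, r j
    simp only [r.injEq] at h
    have : i = 0 := by linear_combination h
    simp [this]
  · -- r i odd, r j
    exact absurd h (by simp)
  · simp only [sr.injEq] at h
    have : i = 0 := by linear_combination h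
    simp [this]
  · exact absurd h (by simp)
  · exact absurd h (by simp)
  · -- sr i odd, r j : r (-j - i) = r j
    exfalso
    simp only [r.injEq] at h
    have hieq : i = -j - j := by linear_combination -h
    have h0 : par h2 i = 0 := by
      rw [hieq, map_sub, map_neg]; exact hmm _
    rw [hi] at h0; exact one_ne_zero_zmod2 h0
  · exact absurd h (by simp)
  · exfalso
    simp only [sr.injEq] at h
    have hieq : i = -j - j - 2 := by linear_combination -h
    have h0 : par h2 i = 0 := by
      rw [hieq]; simp only [map_sub, map_neg, map_ofNat]; exact hmm2 _
    rw [hi] at h0; exact one_ne_zero_zmod2 h0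

lemma phi_injective (h2 : 2 ∣ n) : Function.Injective (phi h2) := by
  rw [injective_iff_map_eq_one]
  intro g hg
  exact phi_free h2 g (r 0) (by rw [hg]; rfl)

lemma closure_r_sr [NeZero n] :
    Subgroup.closure {(.r 1 : DihedralGroup n), .sr 0} = ⊤ := by
  rw [eq_top_iff]
  rintro (i | i) -
  · have : (r i : DihedralGroup n) = r 1 ^ i.val := by
      rw [r_one_pow, ZMod.natCast_val, ZMod.cast_id]
    rw [this]
    exact pow_mem (Subgroup.subset_closure (by simp)) _
  · have : (sr i : DihedralGroup n) = sr 0 * r 1 ^ i.val := by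
      rw [r_one_pow, ZMod.natCast_val, ZMod.cast_id, sr_mul_r, zero_add]
    rw [this]
    exact mul_mem (Subgroup.subset_closure (by simp)) 
      (pow_mem (Subgroup.subset_closure (by simp)) _)

lemma phi_range (h2 : 2 ∣ n) [NeZero n] :
    (phi h2).range = Subgroup.closure {c0 n, t0 n} := by
  rw [MonoidHom.range_eq_map, ← closure_r_sr, MonoidHom.map_closure,
    Set.image_insert_eq, Set.image_singleton, phi_r_one, phi_sr_zero]

@[simp] lemma c0_inv_r (i : ZMod n) : (c0 n)⁻¹ (r i) = sr (i - 2) := rfl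
@[simp] lemma c0_inv_sr (i : ZMod n) : (c0 n)⁻¹ (sr i) = r i := rfl

lemma t0_c0_t0 : t0 n * c0 n * t0 n = (c0 n)⁻¹ := by
  ext (i | i) <;>
    simp only [Equiv.Perm.mul_apply, t0_r, t0_sr, c0_r, c0_sr, c0_inv_r, c0_inv_sr] <;>
    ring_nf

lemma c0_pow (m : ℕ) : ∀ j : ZMod n,
    ((c0 n ^ m) (r j) = if Even m then r (j + (m : ZMod n)) else sr (j + (m : ZMod n) - 1)) ∧
    ((c0 n ^ m) (sr j) = if Even m then sr (j + (m : ZMod n)) else r (j + (m : ZMod n) + 1)) := by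
  induction m with
  | zero => simp
  | succ m ih =>
    intro j
    have h1 : (c0 n ^ (m + 1)) (r j) = (c0 n ^ m) (sr j) := by
      rw [pow_succ, Equiv.Perm.mul_apply, c0_r]
    have h2 : (c0 n ^ (m + 1)) (sr j) = (c0 n ^ m) (r (j + 2)) := by
      rw [pow_succ, Equiv.Perm.mul_apply, c0_sr]
    rcases Nat.even_or_odd m with hm | hm
    · have hm1 : ¬ Even (m + 1) := by simp [Nat.even_add_one, hm]
      rw [h1, h2, (ih j).2, (ih (j + 2)).1]
      simp only [hm, hm1, if_true, if_false, if_pos, if_neg, Nat.cast_add, Nat.cast_one]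
      constructor <;> ring_nf
    · have hm' : ¬ Even m := Nat.not_even_iff_odd.mpr hm
      have hm1 : Even (m + 1) := Nat.even_add_one.mpr hm'
      rw [h1, h2, (ih j).2, (ih (j + 2)).1]
      simp only [hm', hm1, if_true, if_false, if_pos, if_neg, Nat.cast_add, Nat.cast_one]
      constructor <;> ring_nf

lemma c0_order [NeZero n] (hn4 : 4 ≤ n) (he : Even n) : orderOf (c0 n) = n := by
  have hpos : 0 < n := by omega
  rw [orderOf_eq_iff hpos]
  constructor
  · ext (j | j)
    · rw [(c0_pow n j).1, if_pos he]
      simp [ZMod.natCast_self]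
    · rw [(c0_pow n j).2, if_pos he]
      simp [ZMod.natCast_self]
  · intro m hmn hm0 hcon
    have h0 : (c0 n ^ m) (r 0) = r 0 := by rw [hcon]; rfl
    rw [(c0_pow m 0).1] at h0
    rcases Nat.even_or_odd m with hm | hm
    · rw [if_pos hm] at h0
      simp only [zero_add, r.injEq] at h0
      rw [ZMod.natCast_eq_zero_iff] at h0
      have := Nat.le_of_dvd hm0 h0
      omega
    · rw [if_neg (Nat.not_even_iff_odd.mpr hm)] at h0
      exact absurd h0 (by intro h; cases h)

theorem main (n : ℕ) (hn : 4 ≤ n) (heven : Even n)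
    (β : Equiv.Perm (DihedralGroup n))
    (hβr : ∀ i : ZMod n, β (DihedralGroup.r i) = DihedralGroup.r (-i))
    (hβs : ∀ j : ZMod n, β (DihedralGroup.r j * DihedralGroup.sr 0) =
      DihedralGroup.r (-j + 2) * DihedralGroup.sr 0) :
    β * Equiv.mulRight (DihedralGroup.r 1 ^ 2 * DihedralGroup.sr 0) = c0 n := by
  have hs : ∀ m : ZMod n, β (sr m) = sr (-m - 2) := by
    intro m
    have h := hβs (-m)
    simp only [r_mul_sr, zero_sub, neg_neg] at h
    rw [h]
    congr 1
    ring
  ext (i | i) <;>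
    simp only [Equiv.Perm.mul_apply, Equiv.coe_mulRight, pow_two, r_mul_r, r_mul_sr,
      sr_mul_r, sr_mul_sr, c0_r, c0_sr, hs, hβr] <;>
    congr 1 <;> ring

end DSRS

/-- Let `n ≥ 4` be even and `β` the automorphism of `D_{2n}` with `a ↦ a⁻¹`,
`b ↦ a²b` (i.e. `aⁱ ↦ a⁻ⁱ`, `aʲb ↦ a^{-j+2}b`), viewed as a permutation of
`D_{2n}`. Let `c = R(a²b)β` (apply the right translation `R(a²b)` first, then `β`)
and `R(ab)` the right translation by `ab`. Then `c` has order `n`,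
`R(ab)·c·R(ab) = c⁻¹`, and `L = ⟨c, R(ab)⟩` is a dihedral group of order `2n`
acting regularly on `D_{2n}`, with `L ≠ R(D_{2n})`. -/
theorem dihedral_second_regular_subgroup (n : ℕ) (hn : 4 ≤ n) (heven : Even n)
    (β : Equiv.Perm (DihedralGroup n))
    (hβr : ∀ i : ZMod n, β (DihedralGroup.r i) = DihedralGroup.r (-i))
    (hβs : ∀ j : ZMod n, β (DihedralGroup.r j * DihedralGroup.sr 0) =
      DihedralGroup.r (-j + 2) * DihedralGroup.sr 0) :
    orderOf (β * Equiv.mulRight (DihedralGroup.r 1 ^ 2 * DihedralGroup.sr 0)) = n ∧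
    Equiv.mulRight (DihedralGroup.r 1 * DihedralGroup.sr 0) *
        (β * Equiv.mulRight (DihedralGroup.r 1 ^ 2 * DihedralGroup.sr 0)) *
        Equiv.mulRight (DihedralGroup.r 1 * DihedralGroup.sr 0) =
      (β * Equiv.mulRight (DihedralGroup.r 1 ^ 2 * DihedralGroup.sr 0))⁻¹ ∧
    (Nonempty ((Subgroup.closure
        {β * Equiv.mulRight (DihedralGroup.r 1 ^ 2 * DihedralGroup.sr 0),
         Equiv.mulRight (DihedralGroup.r 1 * DihedralGroup.sr 0)} :
        Subgroup (Equiv.Perm (DihedralGroup n))) ≃* DihedralGroup n)) ∧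
    (∀ x y : DihedralGroup n, ∃! f : (Subgroup.closure
        {β * Equiv.mulRight (DihedralGroup.r 1 ^ 2 * DihedralGroup.sr 0),
         Equiv.mulRight (DihedralGroup.r 1 * DihedralGroup.sr 0)} :
        Subgroup (Equiv.Perm (DihedralGroup n))), (f : Equiv.Perm (DihedralGroup n)) x = y) ∧
    Subgroup.closure
        {β * Equiv.mulRight (DihedralGroup.r 1 ^ 2 * DihedralGroup.sr 0),
         Equiv.mulRight (DihedralGroup.r 1 * DihedralGroup.sr 0)} ≠
      rightRegRep (DihedralGroup n) := by
  classical
  have : NeZero n := ⟨by omega⟩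
  have h2 : 2 ∣ n := heven.two_dvd
  have hc : β * Equiv.mulRight (DihedralGroup.r 1 ^ 2 * DihedralGroup.sr 0) = DSRS.c0 n :=
    DSRS.main n hn heven β hβr hβs
  have ht : Equiv.mulRight (DihedralGroup.r 1 * DihedralGroup.sr 0) = DSRS.t0 n := rfl
  rw [hc, ht]
  have hr : (DSRS.phi h2).range = Subgroup.closure {DSRS.c0 n, DSRS.t0 n} := DSRS.phi_range h2
  have hinj := DSRS.phi_injective h2
  refine ⟨DSRS.c0_order hn heven, DSRS.t0_c0_t0, ?_, ?_, ?_⟩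
  · exact ⟨(MulEquiv.subgroupCongr hr.symm).trans (MonoidHom.ofInjective hinj).symm⟩
  · intro x y
    have hevinj : Function.Injective (fun g => DSRS.phi h2 g x) := by
      intro g g' hgg
      simp only at hgg
      have hx : DSRS.phi h2 (g'⁻¹ * g) x = x := by
        rw [map_mul, Equiv.Perm.mul_apply, hgg, ← Equiv.Perm.mul_apply, ← map_mul,
          inv_mul_cancel, map_one, Equiv.Perm.one_apply]
      have := DSRS.phi_free h2 _ _ hx
      rwa [inv_mul_eq_one, eq_comm] at this
    obtain ⟨g, hg⟩ := (Finite.injective_iff_surjective.mp hevinj) y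
    refine ⟨⟨DSRS.phi h2 g, hr ▸ ⟨g, rfl⟩⟩, hg, ?_⟩
    rintro ⟨f, hf⟩ hfx
    rw [← hr] at hf
    obtain ⟨g', hg'⟩ := hf
    have : g' = g := hevinj (show (DSRS.phi h2) g' x = (DSRS.phi h2) g x by
      rw [hg']; exact hfx.trans hg.symm)
    subst this
    exact Subtype.ext hg'.symm
  · intro hEq
    have hmem : DSRS.c0 n ∈ rightRegRep (DihedralGroup n) := by
      rw [← hEq]
      exact Subgroup.subset_closure (Set.mem_insert _ _)
    obtain ⟨g, hg⟩ := hmem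
    have e1 := Equiv.ext_iff.mp hg (r 0)
    have e2 := Equiv.ext_iff.mp hg (sr 0)
    simp only [rightRegHom, MonoidHom.coe_mk, OneHom.coe_mk, Equiv.coe_mulRight,
      DSRS.c0_r, DSRS.c0_sr, r_mul_r, r_mul_sr, sr_mul_r, sr_mul_sr] at e1 e2
    -- e1 : r 0 * g⁻¹ = sr 0, e2 : sr 0 * g⁻¹ = r (0 + 2)
    have hginv : g⁻¹ = sr 0 := by rwa [show (r 0 : DihedralGroup n) = 1 from rfl, one_mul] at e1
    rw [hginv, sr_mul_sr, sub_self, zero_add] at e2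
    have : ((2 : ℕ) : ZMod n) = 0 := by
      have := (r.injEq _ _).mp e2.symm
      push_cast
      exact this
    rw [ZMod.natCast_eq_zero_iff] at this
    have := Nat.le_of_dvd (by norm_num) this
    omega
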